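/- Let Z : [1,∞) → ℝ^k be C² with Z''(t) = A(t)Z'(t) + B(t)Z(t) where |A(t)| + t|B(t)| ≤ C₁ t^(−1−q). Define h(t) = t²|Z'(t)|² + |Z(t)|². Then |h'(t)| ≤ (3(1+C₁)/t) h(t) for all t ≥ 1, and consequently h(1) t^(−3(1+C₁)) ≤ h(t) ≤ h(1) t^(3(1+C₁)). -/

import Mathlib

open Set Real

lemma gronwall_aux (h h' : ℝ → ℝ) (c : ℝ)
    (hh : ∀ t ∈ Set.Ici (1:ℝ), HasDerivWithinAt h (h' t) (Set.Ici 1) t)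
    (hb : ∀ t ∈ Set.Ici (1:ℝ), |h' t| ≤ c / t * h t) :
    ∀ t ∈ Set.Ici (1:ℝ), h 1 * t ^ (-c) ≤ h t ∧ h t ≤ h 1 * t ^ c := by
  have hcont : ContinuousOn h (Set.Ici 1) := fun t ht => (hh t ht).continuousWithinAt
  have hpow : ∀ p : ℝ, ContinuousOn (fun t : ℝ => t ^ p) (Set.Ici 1) := fun p =>
    ContinuousOn.rpow_const continuousOn_id fun x hx =>
      Or.inl (ne_of_gt (lt_of_lt_of_le one_pos hx))
  have hint : interior (Set.Ici (1:ℝ)) = Set.Ioi 1 := interior_Ici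
  -- derivative facts at interior points
  have hderivAt : ∀ x ∈ Set.Ioi (1:ℝ), HasDerivAt h (h' x) x := fun x hx =>
    (hh x (Set.mem_Ici.2 (le_of_lt hx))).hasDerivAt (Ici_mem_nhds hx)
  -- upper bound via antitone g = h * t^(-c)
  have upper : AntitoneOn (fun t => h t * t ^ (-c)) (Set.Ici 1) := by
    apply antitoneOn_of_deriv_nonpos (convex_Ici 1) (hcont.mul (hpow (-c)))
    · rw [hint]
      intro x hx
      have hxp : (0:ℝ) < x := lt_trans one_pos hx
      exact ((hderivAt x hx).mul
        (Real.hasDerivAt_rpow_const (Or.inl (ne_of_gt hxp)))).differentiableAt.differentiableWithinAt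
    · rw [hint]
      intro x hx
      have hxp : (0:ℝ) < x := lt_trans one_pos hx
      have hd := (hderivAt x hx).mul (Real.hasDerivAt_rpow_const (p := -c) (Or.inl (ne_of_gt hxp)))
      rw [hd.deriv]
      have hP : (0:ℝ) < x ^ (-c) := Real.rpow_pos_of_pos hxp _
      have h1 : x ^ (-c - 1) = x ^ (-c) / x := by
        rw [show (-c - 1 : ℝ) = -c + (-1) by ring, Real.rpow_add hxp, Real.rpow_neg_one,
          div_eq_mul_inv]
      have key := mul_le_mul_of_nonneg_right ((abs_le.1 (hb x (Set.mem_Ici.2 (le_of_lt hx)))).2) hP.le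
      rw [h1]
      have heq : c / x * h x * x ^ (-c) = -(h x * (-c * (x ^ (-c) / x))) := by
        field_simp [hxp.ne']
      linarith [heq ▸ key]
  have lower : MonotoneOn (fun t => h t * t ^ c) (Set.Ici 1) := by
    apply monotoneOn_of_deriv_nonneg (convex_Ici 1) (hcont.mul (hpow c))
    · rw [hint]
      intro x hx
      have hxp : (0:ℝ) < x := lt_trans one_pos hx
      exact ((hderivAt x hx).mul
        (Real.hasDerivAt_rpow_const (Or.inl (ne_of_gt hxp)))).differentiableAt.differentiableWithinAt
    · rw [hint]
      intro x hx
      have hxp : (0:ℝ) < x := lt_trans one_pos hx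
      have hd := (hderivAt x hx).mul (Real.hasDerivAt_rpow_const (p := c) (Or.inl (ne_of_gt hxp)))
      rw [hd.deriv]
      have hP : (0:ℝ) < x ^ c := Real.rpow_pos_of_pos hxp _
      have h1 : x ^ (c - 1) = x ^ c / x := by
        rw [show (c - 1 : ℝ) = c + (-1) by ring, Real.rpow_add hxp, Real.rpow_neg_one,
          div_eq_mul_inv]
      have key := mul_le_mul_of_nonneg_right ((abs_le.1 (hb x (Set.mem_Ici.2 (le_of_lt hx)))).1) hP.le
      rw [h1]
      have heq : -(c / x * h x) * x ^ c = -(h x * (c * (x ^ c / x))) := by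
        field_simp [hxp.ne']
      linarith [heq ▸ key]
  intro t ht
  have htp : (0:ℝ) < t := lt_of_lt_of_le one_pos ht
  have hPc : (0:ℝ) < t ^ c := Real.rpow_pos_of_pos htp _
  have hPnc : (0:ℝ) < t ^ (-c) := Real.rpow_pos_of_pos htp _
  have hcancel : t ^ (-c) * t ^ c = 1 := by
    rw [← Real.rpow_add htp]; simp
  constructor
  · have := lower (self_mem_Ici) ht ht
    simp only [Real.one_rpow, mul_one] at this
    -- h 1 ≤ h t * t ^ c
    have h2 := mul_le_mul_of_nonneg_right this hPnc.le
    calc h 1 * t ^ (-c) ≤ h t * t ^ c * t ^ (-c) := h2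
      _ = h t * (t ^ (-c) * t ^ c) := by ring
      _ = h t := by rw [hcancel, mul_one]
  · have := upper (self_mem_Ici) ht ht
    simp only [Real.one_rpow, mul_one] at this
    have h2 := mul_le_mul_of_nonneg_right this hPc.le
    calc h t = h t * (t ^ (-c) * t ^ c) := by rw [hcancel, mul_one]
      _ = h t * t ^ (-c) * t ^ c := by ring
      _ ≤ h 1 * t ^ c := h2

theorem stmt_2 (k : ℕ) (Z Z' Z'' : ℝ → EuclideanSpace ℝ (Fin k))
    (A B : ℝ → (EuclideanSpace ℝ (Fin k) →L[ℝ] EuclideanSpace ℝ (Fin k)))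
    (C₁ q : ℝ) (hC₁ : 0 < C₁) (hq : 0 < q)
    (hA : ContinuousOn A (Set.Ici 1)) (hB : ContinuousOn B (Set.Ici 1))
    (hZ'cont : ContinuousOn Z' (Set.Ici 1)) (hZ''cont : ContinuousOn Z'' (Set.Ici 1))
    (hderiv1 : ∀ t ∈ Set.Ici (1:ℝ), HasDerivWithinAt Z (Z' t) (Set.Ici 1) t)
    (hderiv2 : ∀ t ∈ Set.Ici (1:ℝ), HasDerivWithinAt Z' (Z'' t) (Set.Ici 1) t)
    (hode : ∀ t ∈ Set.Ici (1:ℝ), Z'' t = A t (Z' t) + B t (Z t))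
    (hbound : ∀ t ∈ Set.Ici (1:ℝ), ‖A t‖ + t * ‖B t‖ ≤ C₁ * t ^ (-1 - q)) :
    ∃ h' : ℝ → ℝ,
      (∀ t ∈ Set.Ici (1:ℝ),
        HasDerivWithinAt (fun s => s ^ 2 * ‖Z' s‖ ^ 2 + ‖Z s‖ ^ 2) (h' t) (Set.Ici 1) t ∧
        |h' t| ≤ (3 * (1 + C₁) / t) * (t ^ 2 * ‖Z' t‖ ^ 2 + ‖Z t‖ ^ 2)) ∧
      (∀ t ∈ Set.Ici (1:ℝ),
        (‖Z' 1‖ ^ 2 + ‖Z 1‖ ^ 2) * t ^ (-(3 * (1 + C₁))) ≤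
            t ^ 2 * ‖Z' t‖ ^ 2 + ‖Z t‖ ^ 2 ∧
        t ^ 2 * ‖Z' t‖ ^ 2 + ‖Z t‖ ^ 2 ≤ (‖Z' 1‖ ^ 2 + ‖Z 1‖ ^ 2) * t ^ (3 * (1 + C₁))) := by
  set H : ℝ → ℝ := fun s => s ^ 2 * ‖Z' s‖ ^ 2 + ‖Z s‖ ^ 2 with hHdef
  set H' : ℝ → ℝ := fun t => 2 * t * ‖Z' t‖ ^ 2
      + t ^ 2 * (2 * (inner ℝ (Z' t) (Z'' t) : ℝ)) + 2 * (inner ℝ (Z t) (Z' t) : ℝ) with hH'def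
  have key : ∀ t ∈ Set.Ici (1:ℝ),
      HasDerivWithinAt H (H' t) (Set.Ici 1) t ∧
      |H' t| ≤ (3 * (1 + C₁) / t) * H t := by
    intro t ht
    have htp : (0:ℝ) < t := lt_of_lt_of_le one_pos ht
    constructor
    · -- derivative
      have hip : HasDerivWithinAt (fun s => (inner ℝ (Z' s) (Z' s) : ℝ))
          ((inner ℝ (Z' t) (Z'' t) : ℝ) + (inner ℝ (Z'' t) (Z' t) : ℝ)) (Set.Ici 1) t :=
        (hderiv2 t ht).inner ℝ (hderiv2 t ht)
      have hip2 : HasDerivWithinAt (fun s => (inner ℝ (Z s) (Z s) : ℝ))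
          ((inner ℝ (Z t) (Z' t) : ℝ) + (inner ℝ (Z' t) (Z t) : ℝ)) (Set.Ici 1) t :=
        (hderiv1 t ht).inner ℝ (hderiv1 t ht)
      have hsq : HasDerivWithinAt (fun s : ℝ => s ^ 2) (2 * t) (Set.Ici 1) t := by
        simpa using (hasDerivAt_pow 2 t).hasDerivWithinAt
      have hsum := (hsq.mul hip).add hip2
      have hfun : (fun s => s ^ 2 * (inner ℝ (Z' s) (Z' s) : ℝ) + (inner ℝ (Z s) (Z s) : ℝ)) = H := by
        funext s
        rw [real_inner_self_eq_norm_sq, real_inner_self_eq_norm_sq]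
      have hval : 2 * t * (inner ℝ (Z' t) (Z' t) : ℝ)
          + t ^ 2 * ((inner ℝ (Z' t) (Z'' t) : ℝ) + (inner ℝ (Z'' t) (Z' t) : ℝ))
          + ((inner ℝ (Z t) (Z' t) : ℝ) + (inner ℝ (Z' t) (Z t) : ℝ)) = H' t := by
        rw [hH'def, real_inner_self_eq_norm_sq]
        linear_combination t ^ 2 * real_inner_comm (Z' t) (Z'' t) + real_inner_comm (Z t) (Z' t)
      rw [← hfun, ← hval]
      exact hsum
    · -- bound
      have hN : ‖Z'' t‖ ≤ ‖A t‖ * ‖Z' t‖ + ‖B t‖ * ‖Z t‖ := by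
        rw [hode t ht]
        exact le_trans (norm_add_le _ _)
          (add_le_add ((A t).le_opNorm _) ((B t).le_opNorm _))
      have hrp : C₁ * t ^ (-1 - q) ≤ C₁ / t := by
        have h1 : t ^ (-1 - q : ℝ) ≤ t ^ (-1 : ℝ) :=
          Real.rpow_le_rpow_of_exponent_le ht (by linarith)
        rw [Real.rpow_neg_one] at h1
        calc C₁ * t ^ (-1 - q : ℝ) ≤ C₁ * t⁻¹ :=
              mul_le_mul_of_nonneg_left h1 hC₁.le
          _ = C₁ / t := by rw [div_eq_mul_inv]
      have hAb : ‖A t‖ ≤ C₁ / t := by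
        have := hbound t ht
        nlinarith [norm_nonneg (B t), mul_nonneg htp.le (norm_nonneg (B t))]
      have hBb : t * ‖B t‖ ≤ C₁ / t := by
        have := hbound t ht
        nlinarith [norm_nonneg (A t)]
      have hA2 : ‖A t‖ * t ≤ C₁ := (le_div_iff₀ htp).1 hAb
      have hB2 : t * ‖B t‖ * t ≤ C₁ := (le_div_iff₀ htp).1 hBb
      have i1 : |(inner ℝ (Z' t) (Z'' t) : ℝ)| ≤ ‖Z' t‖ * ‖Z'' t‖ := abs_real_inner_le_norm _ _
      have i2 : |(inner ℝ (Z t) (Z' t) : ℝ)| ≤ ‖Z t‖ * ‖Z' t‖ := abs_real_inner_le_norm _ _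
      have habs : |H' t| ≤ 2 * t * ‖Z' t‖ ^ 2 + t ^ 2 * (2 * (‖Z' t‖ * ‖Z'' t‖))
          + 2 * (‖Z t‖ * ‖Z' t‖) := by
        rw [hH'def]
        refine le_trans (abs_add_le _ _) ?_
        refine add_le_add (le_trans (abs_add_le _ _) (add_le_add ?_ ?_)) ?_
        · rw [abs_of_nonneg (by positivity)]
        · rw [abs_mul, abs_mul, abs_of_nonneg (by positivity : (0:ℝ) ≤ t ^ 2),
            abs_of_nonneg (by norm_num : (0:ℝ) ≤ 2)]
          exact mul_le_mul_of_nonneg_left (mul_le_mul_of_nonneg_left i1 (by norm_num))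
            (by positivity)
        · rw [abs_mul, abs_of_nonneg (by norm_num : (0:ℝ) ≤ 2)]
          exact mul_le_mul_of_nonneg_left i2 (by norm_num)
      refine le_trans habs ?_
      rw [show H t = t ^ 2 * ‖Z' t‖ ^ 2 + ‖Z t‖ ^ 2 from rfl]
      rw [div_mul_eq_mul_div, le_div_iff₀ htp]
      nlinarith [mul_le_mul_of_nonneg_left hN
          (show (0:ℝ) ≤ 2 * t ^ 3 * ‖Z' t‖ by positivity),
        mul_le_mul_of_nonneg_right hA2
          (show (0:ℝ) ≤ 2 * t ^ 2 * ‖Z' t‖ ^ 2 by positivity),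
        mul_le_mul_of_nonneg_right hB2
          (show (0:ℝ) ≤ 2 * ‖Z' t‖ * ‖Z t‖ * t by positivity),
        mul_nonneg hC₁.le (sq_nonneg (t * ‖Z' t‖ - ‖Z t‖)),
        sq_nonneg (t * ‖Z' t‖ - ‖Z t‖), norm_nonneg (Z' t), norm_nonneg (Z t),
        mul_nonneg (norm_nonneg (Z' t)) (norm_nonneg (Z t)), htp, ht,
        sq_nonneg ‖Z t‖, mul_nonneg hC₁.le (sq_nonneg ‖Z t‖)]
  have hgron := gronwall_aux H H' (3 * (1 + C₁)) (fun t ht => (key t ht).1)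
    (fun t ht => by
      have := (key t ht).2
      rw [div_mul_eq_mul_div, mul_comm] at this ⊢
      exact this)
  have hH1 : H 1 = ‖Z' 1‖ ^ 2 + ‖Z 1‖ ^ 2 := by
    rw [hHdef]; norm_num
  refine ⟨H', key, fun t ht => ?_⟩
  have := hgron t ht
  rw [hH1] at this
  exact this
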